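/- Let a, x in R^d, c in [d], and let B = bot(a,c) be the complement of a set of c largest-magnitude indices of a. Let Y_1,...,Y_c be i.i.d. with P(Y = a_j x_j / p_j) = p_j = a_j^2 / ||a_bot||_2^2 for j in B (assume a_bot ≠ 0). Then the estimator Z = (a_top)^T x + (1/c) Σ_t Y_t satisfies E[Z] = a^T x and E[Z^2] ≤ (a^T x)^2 + (1/c) ||a_bot||_2^2 ||x||_2^2. -/

import Mathlib

open MeasureTheory ProbabilityTheory Finset

/-- Dot product estimator: compute `a_topᵀx` exactly on the `c` largest-magnitude
coordinates `T`, and estimate `a_botᵀx` by averaging `c` i.i.d. importance samples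
(`j ∉ T` with probability `p_j = a_j²/‖a_bot‖₂²`, value `a_j x_j/p_j`). Then
`E[Z] = aᵀx` and `E[Z²] ≤ (aᵀx)² + (1/c)‖a_bot‖₂²‖x‖₂²`. -/
theorem stmt_4 {d : ℕ} (a x : Fin d → ℝ) (c : ℕ) (hc1 : 1 ≤ c) (hcd : c ≤ d)
    (T : Finset (Fin d)) (hT : T.card = c)
    (htop : ∀ i ∈ T, ∀ j ∉ T, |a j| ≤ |a i|)
    (hbot : ∃ j ∉ T, a j ≠ 0)
    {Ω : Type*} [MeasurableSpace Ω] (μ : Measure Ω) [IsProbabilityMeasure μ]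
    (J : Fin c → Ω → Fin d) (hJmeas : ∀ t, Measurable (J t))
    (hindep : iIndepFun J μ)
    (hJrange : ∀ t ω, J t ω ∉ T)
    (hdist : ∀ t, ∀ j ∉ T, μ {ω | J t ω = j} =
      ENNReal.ofReal ((a j) ^ 2 / ∑ k ∈ Tᶜ, (a k) ^ 2))
    (Z : Ω → ℝ)
    (hZ : ∀ ω, Z ω = (∑ i ∈ T, a i * x i) +
      (1 / c) * ∑ t, a (J t ω) * x (J t ω) / ((a (J t ω)) ^ 2 / ∑ k ∈ Tᶜ, (a k) ^ 2)) :
    (∫ ω, Z ω ∂μ = ∑ i, a i * x i) ∧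
      ∫ ω, (Z ω) ^ 2 ∂μ ≤
        (∑ i, a i * x i) ^ 2 + (1 / c) * (∑ k ∈ Tᶜ, (a k) ^ 2) * ∑ i, (x i) ^ 2 := by
  classical
  set S : ℝ := ∑ k ∈ Tᶜ, (a k) ^ 2 with hSdef
  obtain ⟨j0, hj0T, hj0⟩ := hbot
  have hS : 0 < S := by
    apply Finset.sum_pos' (fun k _ => sq_nonneg _)
    exact ⟨j0, Finset.mem_compl.2 hj0T, by positivity⟩
  set p : Fin d → ℝ := fun j => (a j) ^ 2 / S with hpdef
  set g : Fin d → ℝ := fun j => a j * x j / p j with hgdef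
  have hp0 : ∀ j, 0 ≤ p j := fun j => div_nonneg (sq_nonneg _) hS.le
  -- law of each J t
  have hlaw : ∀ t j, (μ {ω | J t ω = j}).toReal = if j ∈ T then 0 else p j := by
    intro t j
    by_cases hj : j ∈ T
    · have he : {ω | J t ω = j} = ∅ := by
        ext ω
        simp only [Set.mem_setOf_eq, Set.mem_empty_iff_false, iff_false]
        intro h
        exact hJrange t ω (h ▸ hj)
      simp [he, hj]
    · rw [if_neg hj, hdist t j hj]; exact ENNReal.toReal_ofReal (hp0 j)
  haveI hmapP : ∀ t, IsProbabilityMeasure (μ.map (J t)) :=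
    fun t => Measure.isProbabilityMeasure_map (hJmeas t).aemeasurable
  -- integral of any function of J t
  have key : ∀ (t : Fin c) (h : Fin d → ℝ),
      ∫ ω, h (J t ω) ∂μ = ∑ j ∈ Tᶜ, p j * h j := by
    intro t h
    have hmap : ∫ ω, h (J t ω) ∂μ = ∫ j, h j ∂(μ.map (J t)) :=
      (integral_map (hJmeas t).aemeasurable
        (Measurable.of_discrete (f := h)).aestronglyMeasurable).symm
    rw [hmap, integral_fintype (Integrable.of_finite)]
    have hterm : ∀ j : Fin d,
        ((μ.map (J t)) {j}).toReal • h j = (if j ∈ T then 0 else p j) * h j := by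
      intro j
      rw [Measure.map_apply (hJmeas t) (measurableSet_singleton j)]
      have : J t ⁻¹' {j} = {ω | J t ω = j} := rfl
      rw [this, hlaw t j, smul_eq_mul]
    simp only [Measure.real, hterm]
    rw [← Finset.sum_subset (Finset.subset_univ Tᶜ)]
    · exact Finset.sum_congr rfl fun j hj => by
        rw [if_neg (Finset.mem_compl.mp hj)]
    · intro j _ hj
      rw [if_pos (by simpa using hj), zero_mul]
  -- integrability of any function of J t
  have hint : ∀ (t : Fin c) (h : Fin d → ℝ), Integrable (fun ω => h (J t ω)) μ := by
    intro t h
    exact Integrable.comp_measurable (Integrable.of_finite) (hJmeas t)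
  -- bounds on g
  have hgm : Measurable g := Measurable.of_discrete
  have hpg : ∀ j, p j * g j = a j * x j := by
    intro j
    by_cases h : a j = 0
    · simp [hgdef, hpdef, h]
    · have hpne : p j ≠ 0 := by
        simp only [hpdef]
        positivity
      rw [hgdef]
      rw [mul_comm, div_mul_cancel₀ _ hpne]
  have hpg2 : ∀ j, p j * (g j * g j) ≤ S * x j ^ 2 := by
    intro j
    by_cases h : a j = 0
    · simp [hgdef, hpdef, h]
      positivity
    · have hpne : p j ≠ 0 := by simp only [hpdef]; positivity
      have : p j * (g j * g j) = S * x j ^ 2 := by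
        simp only [hgdef, hpdef]
        field_simp
      rw [this]
  set m : ℝ := ∑ i ∈ T, a i * x i with hmdef
  set b : ℝ := ∑ j ∈ Tᶜ, a j * x j with hbdef
  set V : ℝ := S * ∑ i, x i ^ 2 with hVdef
  have hV0 : 0 ≤ V := by
    apply mul_nonneg hS.le
    exact Finset.sum_nonneg fun i _ => sq_nonneg _
  have hmb : m + b = ∑ i, a i * x i := Finset.sum_add_sum_compl T _
  -- mean of one sample
  have hE1 : ∀ t, ∫ ω, g (J t ω) ∂μ = b := by
    intro t
    rw [key t g, hbdef]
    exact Finset.sum_congr rfl fun j _ => hpg j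
  -- second moment of one sample
  have hE2 : ∀ t, ∫ ω, g (J t ω) * g (J t ω) ∂μ ≤ V := by
    intro t
    rw [key t (fun j => g j * g j)]
    calc ∑ j ∈ Tᶜ, p j * (g j * g j) ≤ ∑ j ∈ Tᶜ, S * x j ^ 2 :=
          Finset.sum_le_sum fun j _ => hpg2 j
      _ ≤ ∑ j, S * x j ^ 2 := by
          apply Finset.sum_le_sum_of_subset_of_nonneg (Finset.subset_univ _)
          intro j _ _
          positivity
      _ = V := by rw [hVdef, Finset.mul_sum]
  -- cross terms
  have hcross : ∀ s t : Fin c, s ≠ t → ∫ ω, g (J s ω) * g (J t ω) ∂μ = b * b := by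
    intro s t hst
    have hi : IndepFun (fun ω => g (J s ω)) (fun ω => g (J t ω)) μ :=
      (hindep.indepFun hst).comp hgm hgm
    have := hi.integral_mul_eq_mul_integral
      (hgm.comp (hJmeas s)).aestronglyMeasurable
      (hgm.comp (hJmeas t)).aestronglyMeasurable
    rw [hE1 s, hE1 t] at this
    exact this
  -- integrability of products
  have hintmul : ∀ s t : Fin c, Integrable (fun ω => g (J s ω) * g (J t ω)) μ := by
    intro s t
    refine (hint t g).bdd_mul (c := ∑ j, |g j|) (hgm.comp (hJmeas s)).aestronglyMeasurable
      (Filter.Eventually.of_forall fun ω => ?_)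
    calc ‖g (J s ω)‖ = |g (J s ω)| := rfl
      _ ≤ ∑ j, |g j| :=
        Finset.single_le_sum (f := fun j => |g j|) (fun j _ => abs_nonneg _)
          (Finset.mem_univ _)
  -- the sum of samples
  set W : Ω → ℝ := fun ω => ∑ t, g (J t ω) with hWdef
  have hintW : Integrable W μ := integrable_finset_sum _ fun t _ => hint t g
  have hEW : ∫ ω, W ω ∂μ = c * b := by
    rw [hWdef]
    rw [integral_finset_sum _ fun t _ => hint t g]
    simp [hE1]
  have hintW2 : Integrable (fun ω => W ω * W ω) μ := by
    have : (fun ω => W ω * W ω)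
        = fun ω => ∑ s, ∑ t, g (J s ω) * g (J t ω) := by
      funext ω
      rw [hWdef]
      rw [Finset.sum_mul_sum]
    rw [this]
    exact integrable_finset_sum _ fun s _ =>
      integrable_finset_sum _ fun t _ => hintmul s t
  have hEW2 : ∫ ω, W ω * W ω ∂μ ≤ c * (V + (c - 1) * (b * b)) := by
    have hrw : (fun ω => W ω * W ω)
        = fun ω => ∑ s, ∑ t, g (J s ω) * g (J t ω) := by
      funext ω
      rw [hWdef, Finset.sum_mul_sum]
    rw [hrw, integral_finset_sum _ fun s _ =>
      integrable_finset_sum _ fun t _ => hintmul s t]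
    rw [Finset.sum_congr rfl fun (s : Fin c) _ =>
      integral_finset_sum Finset.univ fun t _ => hintmul s t]
    have hinner : ∀ s : Fin c,
        (∑ t, ∫ ω, g (J s ω) * g (J t ω) ∂μ) ≤ V + (c - 1) * (b * b) := by
      intro s
      rw [← Finset.sum_erase_add _ _ (Finset.mem_univ s)]
      have h1 : ∑ t ∈ Finset.univ.erase s, ∫ ω, g (J s ω) * g (J t ω) ∂μ
          = (c - 1) * (b * b) := by
        rw [Finset.sum_congr rfl fun t ht =>
          hcross s t (Ne.symm (Finset.ne_of_mem_erase ht))]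
        rw [Finset.sum_const, Finset.card_erase_of_mem (Finset.mem_univ s)]
        simp only [Finset.card_univ, Fintype.card_fin, nsmul_eq_mul]
        rw [Nat.cast_sub hc1]
        norm_num
      rw [h1]
      have := hE2 s
      linarith
    calc ∑ s, ∑ t, ∫ ω, g (J s ω) * g (J t ω) ∂μ
        ≤ ∑ s : Fin c, (V + (c - 1) * (b * b)) :=
          Finset.sum_le_sum fun s _ => hinner s
      _ = c * (V + (c - 1) * (b * b)) := by
          rw [Finset.sum_const]
          simp only [Finset.card_univ, Fintype.card_fin, nsmul_eq_mul]
  -- rewrite Z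
  have hC0 : (0 : ℝ) < (c : ℝ) := by exact_mod_cast hc1
  have hZw : Z = fun ω => m + (1 / c) * W ω := by
    funext ω
    rw [hZ ω, hmdef, hWdef]
  -- first moment of Z
  have hEZ : ∫ ω, Z ω ∂μ = ∑ i, a i * x i := by
    rw [hZw]
    rw [integral_add (integrable_const m) (hintW.const_mul _)]
    rw [integral_const, integral_const_mul _ _, hEW]
    simp only [probReal_univ, measure_univ, ENNReal.toReal_one, smul_eq_mul, one_mul]
    rw [← hmb]
    field_simp
  refine ⟨hEZ, ?_⟩
  -- second moment of Z
  have hZsq : (fun ω => Z ω ^ 2)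
      = fun ω => (m ^ 2 + (2 * m * (1 / c)) * W ω) + (1 / c) ^ 2 * (W ω * W ω) := by
    funext ω
    rw [hZw]
    ring
  rw [hZsq]
  rw [integral_add (by exact (integrable_const _).add (hintW.const_mul _))
    (hintW2.const_mul _)]
  rw [integral_add (integrable_const _) (hintW.const_mul _)]
  rw [integral_const, integral_const_mul _ _, integral_const_mul _ _, hEW]
  simp only [probReal_univ, measure_univ, ENNReal.toReal_one, smul_eq_mul, one_mul]
  rw [← hmb]
  have h2 : (1 / (c : ℝ)) ^ 2 * ∫ ω, W ω * W ω ∂μ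
      ≤ (1 / (c : ℝ)) ^ 2 * (c * (V + (c - 1) * (b * b))) := by
    apply mul_le_mul_of_nonneg_left hEW2 (by positivity)
  have hgoal : m ^ 2 + 2 * m * (1 / c) * (c * b)
      + (1 / (c : ℝ)) ^ 2 * (c * (V + (c - 1) * (b * b)))
      ≤ (m + b) ^ 2 + 1 / c * S * ∑ i, x i ^ 2 := by
    have hCne : (c : ℝ) ≠ 0 := ne_of_gt hC0
    have e1 : 2 * m * (1 / (c : ℝ)) * (c * b) = 2 * m * b := by
      field_simp
    have e2 : (1 / (c : ℝ)) ^ 2 * (c * (V + (c - 1) * (b * b)))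
        = V / c + (1 - 1 / c) * b ^ 2 := by
      field_simp
    rw [e1, e2]
    have h3 : (1 - 1 / (c : ℝ)) * b ^ 2 ≤ b ^ 2 := by
      have : 0 < 1 / (c : ℝ) := by positivity
      nlinarith [sq_nonneg b]
    have h4 : V / c = 1 / c * S * ∑ i, x i ^ 2 := by
      rw [hVdef]; ring
    nlinarith
  linarith
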